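/- Let K, H be finite-dimensional complex Hilbert spaces, φ : B(K) → B(H) an extremal positive map, and suppose rank φ(P) ≥ 2 for some one-dimensional projection P on K. Then φ is not decomposable. -/

import Mathlib

open Matrix ComplexOrder

/-- A linear map between matrix algebras is positive if it maps positive
semidefinite matrices to positive semidefinite matrices. -/
def PosMap {n m : ℕ} (φ : Matrix (Fin n) (Fin n) ℂ →ₗ[ℂ] Matrix (Fin m) (Fin m) ℂ) : Prop :=
  ∀ X : Matrix (Fin n) (Fin n) ℂ, X.PosSemidef → (φ X).PosSemidef

/-- `P` is a one-dimensional orthogonal projection. -/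
def IsProj1 {n : ℕ} (P : Matrix (Fin n) (Fin n) ℂ) : Prop :=
  P.IsHermitian ∧ P * P = P ∧ P.rank = 1

/-- The ampliation `id ⊗ φ` applied blockwise to a `k × k` block matrix. -/
def amp {n m : ℕ} (k : ℕ) (φ : Matrix (Fin n) (Fin n) ℂ →ₗ[ℂ] Matrix (Fin m) (Fin m) ℂ)
    (M : Matrix (Fin k × Fin n) (Fin k × Fin n) ℂ) : Matrix (Fin k × Fin m) (Fin k × Fin m) ℂ :=
  Matrix.of fun p q => φ (Matrix.of fun a b => M (p.1, a) (q.1, b)) p.2 q.2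

/-- Complete positivity: all ampliations preserve positive semidefiniteness. -/
def CompletelyPositive {n m : ℕ}
    (φ : Matrix (Fin n) (Fin n) ℂ →ₗ[ℂ] Matrix (Fin m) (Fin m) ℂ) : Prop :=
  ∀ (k : ℕ) (M : Matrix (Fin k × Fin n) (Fin k × Fin n) ℂ),
    M.PosSemidef → (amp k φ M).PosSemidef

/-- Complete copositivity: `X ↦ φ(Xᵀ)` is completely positive. -/
def CompletelyCopositive {n m : ℕ}
    (φ : Matrix (Fin n) (Fin n) ℂ →ₗ[ℂ] Matrix (Fin m) (Fin m) ℂ) : Prop :=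
  ∀ (k : ℕ) (M : Matrix (Fin k × Fin n) (Fin k × Fin n) ℂ), M.PosSemidef →
    (Matrix.of fun p q : Fin k × Fin m =>
      φ (Matrix.of fun a b => M (p.1, b) (q.1, a)) p.2 q.2).PosSemidef

/-- `φ` is extremal in the cone of positive maps. -/
def IsExtremalPos {n m : ℕ}
    (φ : Matrix (Fin n) (Fin n) ℂ →ₗ[ℂ] Matrix (Fin m) (Fin m) ℂ) : Prop :=
  PosMap φ ∧ ∀ ψ, PosMap ψ → PosMap (φ - ψ) → ∃ l : ℝ, 0 ≤ l ∧ ψ = (l : ℂ) • φ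

/-- `φ` is decomposable: a sum of a completely positive and a completely
copositive map. -/
def Decomposable {n m : ℕ}
    (φ : Matrix (Fin n) (Fin n) ℂ →ₗ[ℂ] Matrix (Fin m) (Fin m) ℂ) : Prop :=
  ∃ φ₁ φ₂, CompletelyPositive φ₁ ∧ CompletelyCopositive φ₂ ∧ φ = φ₁ + φ₂


/-- Kraus map `X ↦ Vᴴ X V`. -/
noncomputable def kraus {n m : ℕ} (V : Matrix (Fin n) (Fin m) ℂ) :
    Matrix (Fin n) (Fin n) ℂ →ₗ[ℂ] Matrix (Fin m) (Fin m) ℂ where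
  toFun X := Vᴴ * X * V
  map_add' X Y := by simp [Matrix.mul_add, Matrix.add_mul]
  map_smul' c X := by simp [Matrix.mul_smul, Matrix.smul_mul]

/-- Co-Kraus map `X ↦ Vᴴ Xᵀ V`. -/
noncomputable def kraus' {n m : ℕ} (V : Matrix (Fin n) (Fin m) ℂ) :
    Matrix (Fin n) (Fin n) ℂ →ₗ[ℂ] Matrix (Fin m) (Fin m) ℂ where
  toFun X := Vᴴ * Xᵀ * V
  map_add' X Y := by simp [Matrix.transpose_add, Matrix.mul_add, Matrix.add_mul]
  map_smul' c X := by simp [Matrix.transpose_smul, Matrix.mul_smul, Matrix.smul_mul]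

private lemma rank_smul_le {m : ℕ} (c : ℂ) (M : Matrix (Fin m) (Fin m) ℂ) :
    (c • M).rank ≤ M.rank := by
  have h : c • M = (c • (1 : Matrix (Fin m) (Fin m) ℂ)) * M := by
    rw [Matrix.smul_mul, Matrix.one_mul]
  rw [h]
  exact Matrix.rank_mul_le_right _ _

private lemma key {n m : ℕ} {ι : Type} [Fintype ι]
    (φ : Matrix (Fin n) (Fin n) ℂ →ₗ[ℂ] Matrix (Fin m) (Fin m) ℂ)
    (hext : IsExtremalPos φ)
    (P : Matrix (Fin n) (Fin n) ℂ) (hrk : 2 ≤ (φ P).rank)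
    (ψ : ι → (Matrix (Fin n) (Fin n) ℂ →ₗ[ℂ] Matrix (Fin m) (Fin m) ℂ))
    (hpos : ∀ k, PosMap (ψ k))
    (hsum : φ = ∑ k, ψ k)
    (hrank1 : ∀ k, ((ψ k) P).rank ≤ 1) : False := by
  classical
  have hφP : φ P ≠ 0 := by
    intro h
    rw [h, Matrix.rank_zero] at hrk
    omega
  have hsum' : φ P = ∑ k, ψ k P := by rw [hsum]; simp
  have hex : ∃ k, ψ k P ≠ 0 := by
    by_contra h
    push_neg at h
    exact hφP (by rw [hsum']; simp [h])
  obtain ⟨k, hk⟩ := hex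
  have hdiff : PosMap (φ - ψ k) := by
    intro X hX
    have h1 : (φ - ψ k) X = ∑ j ∈ Finset.univ.erase k, ψ j X := by
      rw [LinearMap.sub_apply, hsum, LinearMap.sum_apply,
        ← Finset.sum_erase_add _ _ (Finset.mem_univ k)]
      abel
    rw [h1]
    exact Finset.sum_induction _ _ (fun a b ha hb => ha.add hb) Matrix.PosSemidef.zero
      (fun j _ => hpos j X hX)
  obtain ⟨l, hl0, hlψ⟩ := hext.2 (ψ k) (hpos k) hdiff
  have hlne : (l : ℂ) ≠ 0 := by
    intro h
    apply hk
    rw [hlψ, h]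
    simp
  have hle : (φ P).rank ≤ (ψ k P).rank := by
    have h2 : φ P = (l : ℂ)⁻¹ • (ψ k P) := by
      rw [hlψ]
      rw [LinearMap.smul_apply, smul_smul, inv_mul_cancel₀ hlne, one_smul]
    rw [h2]
    exact rank_smul_le _ _
  have := hrank1 k
  omega
private lemma psd_eq_ctm {ι : Type} [Fintype ι] [DecidableEq ι]
    {A : Matrix ι ι ℂ} (hA : A.PosSemidef) : ∃ B : Matrix ι ι ℂ, A = Bᴴ * B := by
  open MatrixOrder in
  have h0 : (0 : Matrix ι ι ℂ) ≤ A := Matrix.nonneg_iff_posSemidef.mpr hA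
  open MatrixOrder in
  exact ⟨CFC.sqrt A, by
    rw [show (CFC.sqrt A)ᴴ = CFC.sqrt A from (CFC.sqrt_nonneg A).isSelfAdjoint.star_eq,
      CFC.sqrt_mul_sqrt_self A h0]⟩
private lemma cp_kraus {n m : ℕ}
    {φ : Matrix (Fin n) (Fin n) ℂ →ₗ[ℂ] Matrix (Fin m) (Fin m) ℂ}
    (h : CompletelyPositive φ) :
    ∃ V : Fin n × Fin m → Matrix (Fin n) (Fin m) ℂ, φ = ∑ k, kraus (V k) := by
  classical
  set u : Fin n × Fin n → ℂ := fun p => if p.1 = p.2 then 1 else 0 with hu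
  set E : Matrix (Fin n × Fin n) (Fin n × Fin n) ℂ :=
    Matrix.of fun p q => star (u p) * u q with hE
  have hEpsd : E.PosSemidef := by
    have h1 : E = (Matrix.replicateRow Unit u)ᴴ * Matrix.replicateRow Unit u := by
      ext p q
      simp [hE, Matrix.mul_apply, Matrix.replicateRow, Matrix.conjTranspose_apply]
    rw [h1]
    exact Matrix.posSemidef_conjTranspose_mul_self _
  obtain ⟨B, hB⟩ := psd_eq_ctm (h n E hEpsd)
  refine ⟨fun k => Matrix.of fun i p => B k (i, p), ?_⟩
  have hchoi : ∀ (i j : Fin n) (p q : Fin m),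
      φ (Matrix.single i j 1) p q = ∑ k, star (B k (i, p)) * B k (j, q) := by
    intro i j p q
    have h2 : Matrix.single i j (1:ℂ) =
        Matrix.of fun a b => E (i, a) (j, b) := by
      ext a b
      simp only [hE, hu, Matrix.of_apply, Matrix.single]
      split_ifs with h' <;> simp_all
    have h3 : amp n φ E ((i, p)) ((j, q)) = (Bᴴ * B) ((i, p)) ((j, q)) := by rw [hB]
    rw [h2]
    simpa [amp, Matrix.mul_apply, Matrix.conjTranspose_apply] using h3
  ext X : 1
  ext p q
  have hX : φ X p q = ∑ i, ∑ j, X i j * ∑ k, star (B k (i, p)) * B k (j, q) := by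
    conv_lhs => rw [Matrix.matrix_eq_sum_single X]
    rw [map_sum, Matrix.sum_apply]
    refine Finset.sum_congr rfl fun i _ => ?_
    rw [map_sum, Matrix.sum_apply]
    refine Finset.sum_congr rfl fun j _ => ?_
    have h4 : Matrix.single i j (X i j) = X i j • Matrix.single i j (1:ℂ) := by
      ext a b
      simp [Matrix.single, Matrix.smul_apply, mul_ite]
    rw [h4, _root_.map_smul, Matrix.smul_apply, hchoi, smul_eq_mul]
  rw [hX]
  have hR : (∑ k : Fin n × Fin m, kraus ((Matrix.of fun i p => B k (i, p)) : Matrix (Fin n) (Fin m) ℂ)) X p q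
      = ∑ k, ∑ j, (∑ i, star (B k (i, p)) * X i j) * B k (j, q) := by
    rw [LinearMap.sum_apply, Matrix.sum_apply]
    refine Finset.sum_congr rfl fun k _ => ?_
    simp [kraus, Matrix.mul_apply, Matrix.conjTranspose_apply]
  rw [hR]
  calc ∑ i, ∑ j, X i j * ∑ k, star (B k (i, p)) * B k (j, q)
      = ∑ i, ∑ j, ∑ k, X i j * (star (B k (i, p)) * B k (j, q)) := by
        simp [Finset.mul_sum]
    _ = ∑ i, ∑ k, ∑ j, X i j * (star (B k (i, p)) * B k (j, q)) :=
        Finset.sum_congr rfl fun i _ => Finset.sum_comm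
    _ = ∑ k, ∑ i, ∑ j, X i j * (star (B k (i, p)) * B k (j, q)) := Finset.sum_comm
    _ = ∑ k, ∑ j, ∑ i, X i j * (star (B k (i, p)) * B k (j, q)) :=
        Finset.sum_congr rfl fun k _ => Finset.sum_comm
    _ = ∑ k, ∑ j, (∑ i, star (B k (i, p)) * X i j) * B k (j, q) := by
        refine Finset.sum_congr rfl fun k _ => Finset.sum_congr rfl fun j _ => ?_
        rw [Finset.sum_mul]
        exact Finset.sum_congr rfl fun i _ => by ring
private lemma cocp_kraus {n m : ℕ}
    {φ : Matrix (Fin n) (Fin n) ℂ →ₗ[ℂ] Matrix (Fin m) (Fin m) ℂ}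
    (h : CompletelyCopositive φ) :
    ∃ V : Fin n × Fin m → Matrix (Fin n) (Fin m) ℂ, φ = ∑ k, kraus' (V k) := by
  classical
  set u : Fin n × Fin n → ℂ := fun p => if p.1 = p.2 then 1 else 0 with hu
  set E : Matrix (Fin n × Fin n) (Fin n × Fin n) ℂ :=
    Matrix.of fun p q => star (u p) * u q with hE
  have hEpsd : E.PosSemidef := by
    have h1 : E = (Matrix.replicateRow Unit u)ᴴ * Matrix.replicateRow Unit u := by
      ext p q
      simp [hE, Matrix.mul_apply, Matrix.replicateRow, Matrix.conjTranspose_apply]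
    rw [h1]
    exact Matrix.posSemidef_conjTranspose_mul_self _
  obtain ⟨B, hB⟩ := psd_eq_ctm (h n E hEpsd)
  refine ⟨fun k => Matrix.of fun i p => B k (i, p), ?_⟩
  have hchoi : ∀ (i j : Fin n) (p q : Fin m),
      φ (Matrix.single i j 1) p q = ∑ k, star (B k (j, p)) * B k (i, q) := by
    intro i j p q
    have h2 : Matrix.single i j (1:ℂ) =
        Matrix.of fun a b => E ((j, b)) ((i, a)) := by
      ext a b
      simp only [hE, hu, Matrix.of_apply, Matrix.single]
      split_ifs with h' <;> simp_all
    have h3 : (Matrix.of fun p q : Fin n × Fin m =>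
        φ (Matrix.of fun a b => E ((p.1, b)) ((q.1, a))) p.2 q.2) ((j, p)) ((i, q))
        = (Bᴴ * B) ((j, p)) ((i, q)) := by rw [hB]
    rw [h2]
    simpa [Matrix.mul_apply, Matrix.conjTranspose_apply] using h3
  ext X : 1
  ext p q
  have hX : φ X p q = ∑ i, ∑ j, X i j * ∑ k, star (B k (j, p)) * B k (i, q) := by
    conv_lhs => rw [Matrix.matrix_eq_sum_single X]
    rw [map_sum, Matrix.sum_apply]
    refine Finset.sum_congr rfl fun i _ => ?_
    rw [map_sum, Matrix.sum_apply]
    refine Finset.sum_congr rfl fun j _ => ?_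
    have h4 : Matrix.single i j (X i j) = X i j • Matrix.single i j (1:ℂ) := by
      ext a b
      simp [Matrix.single, Matrix.smul_apply, mul_ite]
    rw [h4, _root_.map_smul, Matrix.smul_apply, hchoi, smul_eq_mul]
  rw [hX]
  have hR : (∑ k : Fin n × Fin m, kraus' ((Matrix.of fun i p => B k (i, p)) : Matrix (Fin n) (Fin m) ℂ)) X p q
      = ∑ k, ∑ i, (∑ j, star (B k (j, p)) * X i j) * B k (i, q) := by
    rw [LinearMap.sum_apply, Matrix.sum_apply]
    refine Finset.sum_congr rfl fun k _ => ?_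
    simp [kraus', Matrix.mul_apply, Matrix.conjTranspose_apply, Matrix.transpose_apply]
  rw [hR]
  calc ∑ i, ∑ j, X i j * ∑ k, star (B k (j, p)) * B k (i, q)
      = ∑ i, ∑ j, ∑ k, X i j * (star (B k (j, p)) * B k (i, q)) := by
        simp [Finset.mul_sum]
    _ = ∑ i, ∑ k, ∑ j, X i j * (star (B k (j, p)) * B k (i, q)) :=
        Finset.sum_congr rfl fun i _ => Finset.sum_comm
    _ = ∑ k, ∑ i, ∑ j, X i j * (star (B k (j, p)) * B k (i, q)) := Finset.sum_comm
    _ = ∑ k, ∑ i, (∑ j, star (B k (j, p)) * X i j) * B k (i, q) := by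
        refine Finset.sum_congr rfl fun k _ => Finset.sum_congr rfl fun i _ => ?_
        rw [Finset.sum_mul]
        exact Finset.sum_congr rfl fun j _ => by ring
theorem stmt11 {n m : ℕ}
    (φ : Matrix (Fin n) (Fin n) ℂ →ₗ[ℂ] Matrix (Fin m) (Fin m) ℂ)
    (hext : IsExtremalPos φ)
    (P : Matrix (Fin n) (Fin n) ℂ) (hP : IsProj1 P) (hrk : 2 ≤ (φ P).rank) :
    ¬ Decomposable φ := by
  rintro ⟨φ₁, φ₂, h1, h2, heq⟩
  obtain ⟨V, hV⟩ := cp_kraus h1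
  obtain ⟨W, hW⟩ := cocp_kraus h2
  refine key φ hext P hrk
    (Sum.elim (fun k : Fin n × Fin m => kraus (V k)) (fun k : Fin n × Fin m => kraus' (W k)))
    ?_ ?_ ?_
  · rintro (k | k)
    · exact fun X hX => hX.conjTranspose_mul_mul_same (V k)
    · exact fun X hX => hX.transpose.conjTranspose_mul_mul_same (W k)
  · rw [heq, hV, hW, Fintype.sum_sum_type]
    simp
  · rintro (k | k)
    · show ((V k)ᴴ * P * V k).rank ≤ 1
      calc ((V k)ᴴ * P * V k).rank ≤ (P * V k).rank := by
            rw [Matrix.mul_assoc]; exact Matrix.rank_mul_le_right _ _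
        _ ≤ P.rank := Matrix.rank_mul_le_left _ _
        _ ≤ 1 := le_of_eq hP.2.2
    · show ((W k)ᴴ * Pᵀ * W k).rank ≤ 1
      calc ((W k)ᴴ * Pᵀ * W k).rank ≤ (Pᵀ * W k).rank := by
            rw [Matrix.mul_assoc]; exact Matrix.rank_mul_le_right _ _
        _ ≤ Pᵀ.rank := Matrix.rank_mul_le_left _ _
        _ ≤ 1 := by rw [Matrix.rank_transpose]; exact le_of_eq hP.2.2
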